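/- Let n, k be positive integers, d = gcd(n,k), a ∈ GF(2^n). If k/d is odd, then T_k(x) = a has a solution x in GF(2^n) if and only if T_d^n(a) ∈ GF(2), and in that case there are exactly 2^{d-1} solutions in GF(2^n). If k/d is even, then T_k(x) = a has a solution in GF(2^n) if and only if T_d^n(a) = 0, and in that case there are exactly 2^d solutions in GF(2^n). -/

import Mathlib

/-- `T l k x = ∑_{i=0}^{k/l - 1} x^(2^(l*i))`, the linearized trace-like polynomial. -/
noncomputable def T {F : Type*} [Field F] (l k : ℕ) (x : F) : F :=
  ∑ i ∈ Finset.range (k / l), x ^ (2 ^ (l * i))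

namespace Stmt19Aux

open Polynomial Finset

abbrev F2 := AlgebraicClosure (ZMod 2)

/-- `Tg l N x = ∑_{j<N} x^(2^(l*j))`. -/
noncomputable def Tg (l N : ℕ) (x : F2) : F2 := ∑ j ∈ Finset.range N, x ^ (2 ^ (l * j))

lemma T_eq (l k : ℕ) (x : F2) : T l k x = Tg l (k / l) x := rfl

lemma pp (x : F2) (a b : ℕ) : (x ^ (2^a)) ^ (2^b) = x ^ (2^(a+b)) := by
  rw [← pow_mul, ← pow_add]

lemma pow_pow_fix (x : F2) (e : ℕ) (h : x ^ 2^e = x) : ∀ q, x ^ 2^(e*q) = x := by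
  intro q; induction q with
  | zero => simp
  | succ q ih =>
    have he : e*(q+1) = e*q + e := by ring
    rw [he, ← pp, ih, h]

lemma gcd_fix : ∀ n k : ℕ, ∀ x : F2, x ^ 2^n = x → x ^ 2^k = x → x ^ 2^(Nat.gcd n k) = x := by
  intro n
  induction n using Nat.strong_induction_on with
  | _ n ih =>
    intro k x hn hk
    rcases Nat.eq_zero_or_pos n with h0 | h0
    · subst h0; simpa [Nat.gcd_zero_left] using hk
    · rw [Nat.gcd_rec]
      refine ih (k % n) (Nat.mod_lt _ h0) n x ?_ hn
      have hkd : n * (k / n) + k % n = k := Nat.div_add_mod k n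
      calc x ^ 2^(k % n) = (x ^ 2^(n * (k/n))) ^ 2^(k % n) := by
            rw [pow_pow_fix x n hn (k/n)]
        _ = x ^ 2^(n * (k/n) + k % n) := pp ..
        _ = x := by rw [hkd, hk]

lemma Tg_add (l N : ℕ) (x y : F2) : Tg l N (x + y) = Tg l N x + Tg l N y := by
  unfold Tg
  rw [← Finset.sum_add_distrib]
  exact Finset.sum_congr rfl fun j _ => add_pow_char_pow ..

lemma Tg1_mem (e k : ℕ) (x : F2) (h : x ^ 2^e = x) : (Tg 1 k x) ^ 2^e = Tg 1 k x := by
  unfold Tg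
  rw [sum_pow_char_pow]
  refine Finset.sum_congr rfl fun i _ => ?_
  rw [pp, add_comm, ← pp, h]

lemma Tg1_sq (e : ℕ) (x : F2) : (Tg 1 e x)^2 + x = Tg 1 e x + x ^ 2^e := by
  have h2 : (Tg 1 e x)^2 = ∑ i ∈ range e, x ^ 2^(i+1) := by
    unfold Tg
    rw [sum_pow_char]
    exact Finset.sum_congr rfl fun i _ => by rw [← pow_mul, one_mul, ← pow_succ]
  rw [h2]
  have e1 : (∑ i ∈ range e, x ^ 2^(i+1)) + x = ∑ i ∈ range (e+1), x ^ 2^i := by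
    rw [Finset.sum_range_succ']; simp
  rw [e1, Finset.sum_range_succ]
  congr 1
  exact Finset.sum_congr rfl fun i _ => by rw [one_mul]

lemma Tg1_sq_self (e : ℕ) (x : F2) (h : x ^ 2^e = x) : (Tg 1 e x)^2 = Tg 1 e x := by
  have h1 := Tg1_sq e x
  rw [h] at h1
  exact add_right_cancel h1

lemma Tg1_zero_fix (e : ℕ) (x : F2) (h : Tg 1 e x = 0) : x ^ 2^e = x := by
  have h1 := Tg1_sq e x
  rw [h] at h1
  simpa using h1.symm

lemma Tg_period (l m : ℕ) (x : F2) (h : x ^ 2^l = x) :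
    Tg 1 (l*m) x = if Even m then 0 else Tg 1 l x := by
  induction m with
  | zero => simp [Tg]
  | succ m ih =>
    have hsplit : Tg 1 (l*(m+1)) x = Tg 1 (l*m) x + Tg 1 l x := by
      unfold Tg
      rw [Nat.mul_succ, Finset.sum_range_add]
      congr 1
      refine Finset.sum_congr rfl fun i _ => ?_
      rw [one_mul, one_mul, ← pp x (l*m) i, pow_pow_fix x l h m]
    rw [hsplit, ih]
    rcases Nat.even_or_odd m with he | ho
    · simp [he, Nat.even_add_one]
    · have hm : ¬ Even m := Nat.not_even_iff_odd.mpr ho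
      simp [hm, Nat.even_add_one, CharTwo.add_self_eq_zero]

lemma TdN_mem (d N : ℕ) (x : F2) (h : x ^ 2^(d*N) = x) :
    (Tg d N x) ^ 2^d = Tg d N x := by
  unfold Tg
  rw [sum_pow_char_pow]
  have key : ∀ j : ℕ, (x ^ 2^(d*j)) ^ 2^d = x ^ 2^(d*(j+1)) := fun j => by
    rw [pp, Nat.mul_succ]
  simp only [key]
  have h1 := Finset.sum_range_succ' (fun j => x ^ 2^(d*j)) N
  have h2 := Finset.sum_range_succ (fun j => x ^ 2^(d*j)) N
  rw [h2] at h1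
  have h0 : x ^ 2^(d*0) = x := by simp
  simp only [h, h0] at h1
  exact add_right_cancel h1.symm

lemma Tg_comm (d N k : ℕ) (x : F2) : Tg d N (Tg 1 k x) = Tg 1 k (Tg d N x) := by
  unfold Tg
  have L : ∀ j : ℕ, (∑ i ∈ range k, x ^ 2^(1*i)) ^ 2^(d*j)
      = ∑ i ∈ range k, x ^ 2^(1*i + d*j) := fun j => by
    rw [sum_pow_char_pow]; exact Finset.sum_congr rfl fun i _ => pp ..
  have R : ∀ i : ℕ, (∑ j ∈ range N, x ^ 2^(d*j)) ^ 2^(1*i)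
      = ∑ j ∈ range N, x ^ 2^(d*j + 1*i) := fun i => by
    rw [sum_pow_char_pow]; exact Finset.sum_congr rfl fun j _ => pp ..
  simp only [L, R]
  rw [Finset.sum_comm]
  exact Finset.sum_congr rfl fun i _ => Finset.sum_congr rfl fun j _ => by rw [add_comm]

lemma sq_dichotomy (x : F2) (h : x^2 = x) : x = 0 ∨ x = 1 := by
  have h1 : x * (x - 1) = 0 := by linear_combination h
  rcases mul_eq_zero.mp h1 with h | h
  · exact Or.inl h
  · exact Or.inr (by linear_combination h)

/-- Cardinality of the subfield `GF(2^e)` inside `F2`. -/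
lemma S_spec (e : ℕ) (he : 0 < e) :
    ({x : F2 | x ^ 2^e = x}).Finite ∧ ({x : F2 | x ^ 2^e = x}).ncard = 2^e := by
  classical
  set q : (ZMod 2)[X] := X ^ 2^e - X with hq
  have hsep : q.Separable := galois_poly_separable 2 (2^e) (dvd_pow_self 2 he.ne')
  have hdegX : (X : (ZMod 2)[X]).degree < ((2^e : ℕ) : WithBot ℕ) := by
    rw [degree_X]
    exact_mod_cast Nat.one_lt_two_pow he.ne'
  have hmon : q.Monic := monic_X_pow_sub (degree_X (R := ZMod 2) ▸ hdegX)
  have hdeg : q.degree = (2^e : ℕ) := by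
    rw [hq, degree_sub_eq_left_of_degree_lt (by rw [degree_X_pow]; exact hdegX), degree_X_pow]
  have hq0 : q ≠ 0 := hmon.ne_zero
  have hnd : q.natDegree = 2^e := natDegree_eq_of_degree_eq_some hdeg
  have hroot : q.rootSet F2 = {x : F2 | x ^ 2^e = x} := by
    ext x
    rw [mem_rootSet, and_iff_right hq0]
    simp [hq, sub_eq_zero]
  have hfin : ({x : F2 | x ^ 2^e = x}).Finite := hroot ▸ (q.rootSet F2).toFinite
  refine ⟨hfin, ?_⟩
  have hc := card_rootSet_eq_natDegree (K := F2) hsep (IsAlgClosed.splits _)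
  rw [← hroot, Set.ncard_eq_toFinset_card', Set.toFinset_card, hc, hnd]

/-- Fibers of `Tg l (M+1)` lie in root sets of a polynomial of degree `2^(l*M)`. -/
lemma fiber_le (l M : ℕ) (hl : 0 < l) (c : F2) :
    {x : F2 | Tg l (M+1) x = c}.Finite ∧ {x : F2 | Tg l (M+1) x = c}.ncard ≤ 2^(l*M) := by
  classical
  set E := 2^(l*M) with hE
  have hE1 : 0 < E := Nat.pow_pos (by norm_num)
  set Q : F2[X] := (∑ j ∈ Finset.range M, X ^ 2^(l*j)) - C c with hQ
  have hdQ : Q.degree < (E : ℕ) := by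
    apply lt_of_le_of_lt (degree_sub_le _ _)
    rw [max_lt_iff]
    constructor
    · apply lt_of_le_of_lt (degree_sum_le _ _)
      rw [Finset.sup_lt_iff (by exact_mod_cast WithBot.bot_lt_coe (E : ℕ))]
      intro j hj
      rw [degree_X_pow]
      have hlt : 2^(l*j) < E := by
        rw [hE]
        exact Nat.pow_lt_pow_right (by norm_num)
          (mul_lt_mul_of_pos_left (Finset.mem_range.mp hj) hl)
      exact_mod_cast hlt
    · exact lt_of_le_of_lt degree_C_le (by exact_mod_cast hE1)
  have hP : (X ^ E + Q : F2[X]).Monic := monic_X_pow_add hdQ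
  have hPdeg : (X ^ E + Q : F2[X]).natDegree = E := by
    have hdd : (X ^ E + Q : F2[X]).degree = (E : ℕ) := by
      rw [degree_add_eq_left_of_degree_lt (by rw [degree_X_pow]; exact hdQ), degree_X_pow]
    exact natDegree_eq_of_degree_eq_some hdd
  have hsub : {x : F2 | Tg l (M+1) x = c} ⊆ ((X ^ E + Q : F2[X]).roots.toFinset : Set F2) := by
    intro x hx
    have hx' : Tg l (M+1) x = c := hx
    have hsplit : Tg l (M+1) x = (∑ j ∈ range M, x ^ 2^(l*j)) + x ^ E := by
      unfold Tg
      rw [Finset.sum_range_succ]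
    have h3 : (∑ j ∈ range M, x ^ 2^(l*j)) + x ^ E = c := by rw [← hsplit, hx']
    have heval : eval x (X ^ E + Q : F2[X]) = 0 := by
      rw [hQ]
      simp only [eval_add, eval_pow, eval_X, eval_sub, eval_C, eval_finset_sum]
      linear_combination h3
    simp only [Finset.coe_sort_coe, Finset.mem_coe, Multiset.mem_toFinset,
      mem_roots hP.ne_zero]
    exact heval
  have hfin : {x : F2 | Tg l (M+1) x = c}.Finite :=
    Set.Finite.subset (Finset.finite_toSet _) hsub
  refine ⟨hfin, ?_⟩
  calc {x : F2 | Tg l (M+1) x = c}.ncard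
      ≤ ((X ^ E + Q : F2[X]).roots.toFinset : Set F2).ncard :=
        Set.ncard_le_ncard hsub (Finset.finite_toSet _)
    _ = (X ^ E + Q : F2[X]).roots.toFinset.card := Set.ncard_coe_finset _
    _ ≤ Multiset.card (X ^ E + Q : F2[X]).roots := Multiset.toFinset_card_le _
    _ ≤ (X ^ E + Q : F2[X]).natDegree := card_roots' _
    _ = E := hPdeg

/-- The fiber-counting principle. -/
lemma FIB {Sset : Set F2} (hfin : Sset.Finite) (f : F2 → F2) (Tset : Finset F2) (M : ℕ)
    (hmap : ∀ x ∈ Sset, f x ∈ Tset)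
    (hle : ∀ c ∈ Tset, {x | x ∈ Sset ∧ f x = c}.ncard ≤ M)
    (hcard : Sset.ncard = Tset.card * M) :
    ∀ c ∈ Tset, {x | x ∈ Sset ∧ f x = c}.ncard = M := by
  classical
  set s := hfin.toFinset with hs
  have hfib : ∀ c : F2, {x | x ∈ Sset ∧ f x = c} = ↑(s.filter (fun x => f x = c)) := by
    intro c; ext x; simp [hs, hfin.mem_toFinset]
  have hncard : ∀ c : F2,
      {x | x ∈ Sset ∧ f x = c}.ncard = (s.filter (fun x => f x = c)).card := by
    intro c; rw [hfib c, Set.ncard_coe_finset]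
  have hcards : s.card = ∑ c ∈ Tset, (s.filter (fun x => f x = c)).card :=
    Finset.card_eq_sum_card_fiberwise (fun x hx => hmap x (hfin.mem_toFinset.mp hx))
  have hSs : Sset.ncard = s.card := by rw [← Set.ncard_coe_finset, hfin.coe_toFinset]
  have hsum : (∑ c ∈ Tset, (s.filter (fun x => f x = c)).card) = ∑ _c ∈ Tset, M := by
    rw [← hcards, ← hSs, hcard, Finset.sum_const, smul_eq_mul]
  have heach := (Finset.sum_eq_sum_iff_of_le
    (fun c hc => by rw [← hncard]; exact hle c hc)).mp hsum
  intro c hc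
  rw [hncard c]
  exact heach c hc

end Stmt19Aux

open Stmt19Aux in
theorem stmt_19 (n k : ℕ) (hn : 0 < n) (hk : 0 < k)
    (a : AlgebraicClosure (ZMod 2)) (ha : a ^ (2 ^ n) = a) :
    (Odd (k / Nat.gcd n k) →
      ((∃ x : AlgebraicClosure (ZMod 2), x ^ (2 ^ n) = x ∧ T 1 k x = a) ↔
          (T (Nat.gcd n k) n a) ^ 2 = T (Nat.gcd n k) n a) ∧
      ((T (Nat.gcd n k) n a) ^ 2 = T (Nat.gcd n k) n a →
        Set.ncard {x : AlgebraicClosure (ZMod 2) | x ^ (2 ^ n) = x ∧ T 1 k x = a} =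
          2 ^ (Nat.gcd n k - 1))) ∧
    (Even (k / Nat.gcd n k) →
      ((∃ x : AlgebraicClosure (ZMod 2), x ^ (2 ^ n) = x ∧ T 1 k x = a) ↔
          T (Nat.gcd n k) n a = 0) ∧
      (T (Nat.gcd n k) n a = 0 →
        Set.ncard {x : AlgebraicClosure (ZMod 2) | x ^ (2 ^ n) = x ∧ T 1 k x = a} =
          2 ^ Nat.gcd n k)) := by
  classical
  set d := Nat.gcd n k with hd
  set m := k / d with hm
  set N := n / d with hN
  have hd0 : 0 < d := Nat.gcd_pos_of_pos_left k hn
  have hdk : d * m = k := Nat.mul_div_cancel' (Nat.gcd_dvd_right n k)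
  have hdn : d * N = n := Nat.mul_div_cancel' (Nat.gcd_dvd_left n k)
  have hN0 : 0 < N := by
    rcases Nat.eq_zero_or_pos N with h | h
    · rw [h, Nat.mul_zero] at hdn; omega
    · exact h
  have hdlen : d ≤ n := Nat.le_of_dvd hn (Nat.gcd_dvd_left n k)
  obtain ⟨hSnfin, hSncard⟩ := S_spec n hn
  obtain ⟨hSdfin, hSdcard⟩ := S_spec d hd0
  -- Notation for the base sets
  set Sn : Set F2 := {x : F2 | x ^ 2^n = x} with hSnDef
  set Sd : Set F2 := {x : F2 | x ^ 2^d = x} with hSdDef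
  have hT1 : ∀ x : F2, T 1 k x = Tg 1 k x := fun x => by rw [T_eq, Nat.div_one]
  have hTdeq : T d n a = Tg d N a := by rw [T_eq, ← hN]
  have hsetA : {x : F2 | x ^ 2^n = x ∧ T 1 k x = a}
      = {x : F2 | x ∈ Sn ∧ Tg 1 k x = a} := by
    ext x; simp only [Set.mem_setOf_eq, hT1, hSnDef]
  -- Basic membership facts
  have hSd_sub_Sn : ∀ x : F2, x ∈ Sd → x ∈ Sn := fun x hx => by
    show x ^ 2^n = x
    rw [← hdn]; exact pow_pow_fix x d hx N
  have hker_mem : ∀ x : F2, x ∈ Sn → Tg 1 k x = 0 → x ∈ Sd := by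
    intro x hx h0
    exact gcd_fix n k x hx (Tg1_zero_fix k x h0)
  have hTk_on_Sd : ∀ x : F2, x ∈ Sd → Tg 1 k x = if Even m then 0 else Tg 1 d x := by
    intro x hx; rw [← hdk]; exact Tg_period d m x hx
  have hg_mem : ∀ x : F2, x ∈ Sn → Tg d N x ∈ Sd := fun x hx =>
    TdN_mem d N x (by rw [hdn]; exact hx)
  -- exponent arithmetic
  obtain ⟨N', hN'⟩ : ∃ N', N = N' + 1 := ⟨N - 1, by omega⟩
  obtain ⟨d', hd'⟩ : ∃ d', d = d' + 1 := ⟨d - 1, by omega⟩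
  have hnd' : d * N' = n - d := by
    have h1 : d * N' + d = n := by rw [← hdn, hN']; ring
    omega
  -- fibers of Tg d N over Sd
  have hSdcard' : hSdfin.toFinset.card = 2^d := by
    rw [← Set.ncard_coe_finset, hSdfin.coe_toFinset, hSdcard]
  have hg_fib : ∀ c ∈ hSdfin.toFinset, {x | x ∈ Sn ∧ Tg d N x = c}.ncard = 2^(n-d) := by
    apply FIB hSnfin (Tg d N) hSdfin.toFinset (2^(n-d))
    · intro x hx; rw [Set.Finite.mem_toFinset]; exact hg_mem x hx
    · intro c _
      obtain ⟨hffin, hfle⟩ := fiber_le d N' hd0 c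
      rw [← hN'] at hffin hfle
      rw [hnd'] at hfle
      refine le_trans (Set.ncard_le_ncard ?_ hffin) hfle
      intro x hx; exact hx.2
    · rw [hSncard, hSdcard', ← pow_add]
      congr 1; omega
  have h0Sd : (0 : F2) ∈ hSdfin.toFinset := by
    rw [Set.Finite.mem_toFinset]
    show (0:F2) ^ 2^d = 0
    exact zero_pow (by positivity)
  have h1Sd : (1 : F2) ∈ hSdfin.toFinset := by
    rw [Set.Finite.mem_toFinset]
    show (1:F2) ^ 2^d = 1
    exact one_pow _
  have hFib0 : {x | x ∈ Sn ∧ Tg d N x = 0}.ncard = 2^(n-d) := hg_fib 0 h0Sd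
  have hFib1 : {x | x ∈ Sn ∧ Tg d N x = 1}.ncard = 2^(n-d) := hg_fib 1 h1Sd
  have hFib0fin : {x | x ∈ Sn ∧ Tg d N x = 0}.Finite :=
    Set.Finite.subset hSnfin (fun x hx => hx.1)
  have hFib1fin : {x | x ∈ Sn ∧ Tg d N x = 1}.Finite :=
    Set.Finite.subset hSnfin (fun x hx => hx.1)
  -- the odd condition set
  set Codd : Set F2 := {x | x ∈ Sn ∧ (Tg d N x = 0 ∨ Tg d N x = 1)} with hCoddDef
  have hCodd_eq : Codd = {x | x ∈ Sn ∧ Tg d N x = 0} ∪ {x | x ∈ Sn ∧ Tg d N x = 1} := by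
    ext x; simp only [hCoddDef, Set.mem_setOf_eq, Set.mem_union]; tauto
  have hCoddfin : Codd.Finite := by
    rw [hCodd_eq]; exact Set.Finite.union hFib0fin hFib1fin
  have hCoddcard : Codd.ncard = 2^(n-d) + 2^(n-d) := by
    rw [hCodd_eq, Set.ncard_union_eq ?_ hFib0fin hFib1fin, hFib0, hFib1]
    rw [Set.disjoint_left]
    rintro x ⟨_, h0⟩ ⟨_, h1⟩
    rw [h0] at h1
    exact zero_ne_one h1
  -- kernel in the odd case
  have hker_fib : ∀ c ∈ ({0, 1} : Finset F2),
      {x | x ∈ Sd ∧ Tg 1 d x = c}.ncard = 2^(d-1) := by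
    apply FIB hSdfin (Tg 1 d) ({0, 1} : Finset F2) (2^(d-1))
    · intro x hx
      have := sq_dichotomy _ (Tg1_sq_self d x hx)
      simp only [Finset.mem_insert, Finset.mem_singleton]
      exact this
    · intro c _
      obtain ⟨hffin, hfle⟩ := fiber_le 1 d' (by norm_num) c
      rw [← hd'] at hffin hfle
      rw [one_mul, show d' = d - 1 by omega] at hfle
      refine le_trans (Set.ncard_le_ncard ?_ hffin) hfle
      intro x hx; exact hx.2
    · rw [hSdcard]
      have hc2 : ({0, 1} : Finset F2).card = 2 := by
        rw [Finset.card_insert_of_notMem (by simp), Finset.card_singleton]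
      rw [hc2, show d - 1 = d' by omega, hd', pow_succ]
      ring
  have hKerOddCard : {x | x ∈ Sd ∧ Tg 1 d x = 0}.ncard = 2^(d-1) :=
    hker_fib 0 (Finset.mem_insert_self 0 {1})
  -- coset bound for fibers of Tg 1 k
  have hcoset : ∀ c : F2,
      {x : F2 | x ∈ Sn ∧ Tg 1 k x = c}.ncard ≤ {x : F2 | x ∈ Sn ∧ Tg 1 k x = 0}.ncard := by
    intro c
    rcases Set.eq_empty_or_nonempty {x : F2 | x ∈ Sn ∧ Tg 1 k x = c} with hE | ⟨x0, hx0⟩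
    · simp [hE]
    · apply Set.ncard_le_ncard_of_injOn (fun x => x + x0) ?_ ?_
        (Set.Finite.subset hSnfin (fun x hx => hx.1))
      · rintro x ⟨hx, hxc⟩
        constructor
        · show (x + x0) ^ 2^n = x + x0
          rw [add_pow_char_pow]
          have hx' : x ^ 2^n = x := hx
          have hx0' : x0 ^ 2^n = x0 := hx0.1
          rw [hx', hx0']
        · rw [Tg_add, hxc, hx0.2]
          exact CharTwo.add_self_eq_zero c
      · intro u _ v _ h
        exact add_left_injective x0 h
  -- value of the composition
  have hval : ∀ x : F2, x ∈ Sn →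
      Tg d N (Tg 1 k x) = if Even m then 0 else Tg 1 d (Tg d N x) := by
    intro x hx
    rw [Tg_comm]
    exact hTk_on_Sd _ (hg_mem x hx)
  constructor
  · -- odd case
    intro hodd
    have hmne : ¬ Even m := Nat.not_even_iff_odd.mpr hodd
    have hkerOdd : {x : F2 | x ∈ Sn ∧ Tg 1 k x = 0} = {x | x ∈ Sd ∧ Tg 1 d x = 0} := by
      ext x
      simp only [Set.mem_setOf_eq]
      constructor
      · rintro ⟨hx, h0⟩
        have hxd := hker_mem x hx h0
        refine ⟨hxd, ?_⟩
        have h2 := hTk_on_Sd x hxd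
        rw [if_neg hmne] at h2
        rw [← h2]; exact h0
      · rintro ⟨hxd, h0⟩
        refine ⟨hSd_sub_Sn x hxd, ?_⟩
        rw [hTk_on_Sd x hxd, if_neg hmne]; exact h0
    have hCoddcard' : hCoddfin.toFinset.card = 2^(n-d) + 2^(n-d) := by
      rw [← Set.ncard_coe_finset, hCoddfin.coe_toFinset, hCoddcard]
    have hOddCount : ∀ b ∈ hCoddfin.toFinset,
        {x | x ∈ Sn ∧ Tg 1 k x = b}.ncard = 2^(d-1) := by
      apply FIB hSnfin (Tg 1 k) hCoddfin.toFinset (2^(d-1))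
      · intro x hx
        rw [Set.Finite.mem_toFinset, hCoddDef]
        refine ⟨Tg1_mem n k x hx, ?_⟩
        rw [hval x hx, if_neg hmne]
        exact sq_dichotomy _ (Tg1_sq_self d _ (hg_mem x hx))
      · intro c _
        calc {x | x ∈ Sn ∧ Tg 1 k x = c}.ncard
            ≤ {x : F2 | x ∈ Sn ∧ Tg 1 k x = 0}.ncard := hcoset c
          _ = {x | x ∈ Sd ∧ Tg 1 d x = 0}.ncard := by rw [hkerOdd]
          _ = 2^(d-1) := hKerOddCard
      · rw [hSncard, hCoddcard']
        have h2 : (2^(n-d) + 2^(n-d)) * 2^(d-1) = 2^((n-d) + 1 + (d-1)) := by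
          rw [pow_add, pow_add]; ring
        rw [h2]
        congr 1; omega
    have haCodd : (T d n a) ^ 2 = T d n a → a ∈ hCoddfin.toFinset := by
      intro hcond
      rw [Set.Finite.mem_toFinset, hCoddDef]
      refine ⟨ha, ?_⟩
      rw [hTdeq] at hcond
      exact sq_dichotomy _ hcond
    constructor
    · constructor
      · rintro ⟨x, hx, hTx⟩
        rw [hT1 x] at hTx
        have hor : Tg d N (Tg 1 k x) = 0 ∨ Tg d N (Tg 1 k x) = 1 := by
          rw [hval x hx, if_neg hmne]
          exact sq_dichotomy _ (Tg1_sq_self d _ (hg_mem x hx))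
        rw [hTdeq, ← hTx]
        rcases hor with h | h <;> rw [h] <;> norm_num
      · intro hcond
        have hmem := haCodd hcond
        have hcount := hOddCount a hmem
        have hne : {x | x ∈ Sn ∧ Tg 1 k x = a}.Nonempty := by
          apply Set.nonempty_of_ncard_ne_zero
          rw [hcount]
          positivity
        obtain ⟨x, hx, hTx⟩ := hne
        exact ⟨x, hx, by rw [hT1 x]; exact hTx⟩
    · intro hcond
      rw [hsetA]
      exact hOddCount a (haCodd hcond)
  · -- even case
    intro heven
    have hkerEven : {x : F2 | x ∈ Sn ∧ Tg 1 k x = 0} = Sd := by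
      ext x
      simp only [Set.mem_setOf_eq]
      constructor
      · rintro ⟨hx, h0⟩
        exact hker_mem x hx h0
      · intro hxd
        refine ⟨hSd_sub_Sn x hxd, ?_⟩
        rw [hTk_on_Sd x hxd, if_pos heven]
    have hFib0fin' : {x | x ∈ Sn ∧ Tg d N x = 0}.Finite := hFib0fin
    have hFib0card' : hFib0fin'.toFinset.card = 2^(n-d) := by
      rw [← Set.ncard_coe_finset, hFib0fin'.coe_toFinset, hFib0]
    have hEvenCount : ∀ b ∈ hFib0fin'.toFinset,
        {x | x ∈ Sn ∧ Tg 1 k x = b}.ncard = 2^d := by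
      apply FIB hSnfin (Tg 1 k) hFib0fin'.toFinset (2^d)
      · intro x hx
        rw [Set.Finite.mem_toFinset]
        refine ⟨Tg1_mem n k x hx, ?_⟩
        rw [hval x hx, if_pos heven]
      · intro c _
        calc {x | x ∈ Sn ∧ Tg 1 k x = c}.ncard
            ≤ {x : F2 | x ∈ Sn ∧ Tg 1 k x = 0}.ncard := hcoset c
          _ = Sd.ncard := by rw [hkerEven]
          _ = 2^d := hSdcard
      · rw [hSncard, hFib0card', ← pow_add]
        congr 1; omega
    have haC : T d n a = 0 → a ∈ hFib0fin'.toFinset := by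
      intro hcond
      rw [Set.Finite.mem_toFinset]
      exact ⟨ha, by rw [← hTdeq]; exact hcond⟩
    constructor
    · constructor
      · rintro ⟨x, hx, hTx⟩
        rw [hT1 x] at hTx
        rw [hTdeq, ← hTx, hval x hx, if_pos heven]
      · intro hcond
        have hcount := hEvenCount a (haC hcond)
        have hne : {x | x ∈ Sn ∧ Tg 1 k x = a}.Nonempty := by
          apply Set.nonempty_of_ncard_ne_zero
          rw [hcount]
          positivity
        obtain ⟨x, hx, hTx⟩ := hne
        exact ⟨x, hx, by rw [hT1 x]; exact hTx⟩
    · intro hcond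
      rw [hsetA]
      exact hEvenCount a (haC hcond)
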